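/- Let v be a k-vector in a finite-dimensional real vector space V. Then span(v) equals the set of all vectors of the form v ⌟ α with α ∈ ⋀^{k−1}(V), where v ⌟ α denotes the interior product, i.e., the unique (1)-vector satisfying ⟨v ⌟ α, β⟩ = ⟨v, α ∧ β⟩ for every 1-covector β. -/
import Mathlib

section StmtAux

open ExteriorAlgebra
open CliffordAlgebra (contractLeft contractLeft_ι_mul contractLeft_one ι_mul_ι_comm_of_isOrtho)

variable {V : Type*} [AddCommGroup V] [Module ℝ V]

private lemma stmt5_aux_map_pow {W : Type*} [AddCommGroup W] [Module ℝ W] (f : V →ₗ[ℝ] W) (k : ℕ)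
    {x : ExteriorAlgebra ℝ V} (hx : x ∈ ⋀[ℝ]^k V) :
    ExteriorAlgebra.map f x ∈ ⋀[ℝ]^k W := by
  rw [← ιMulti_span_fixedDegree] at hx
  induction hx using Submodule.span_induction with
  | mem x hx =>
    obtain ⟨w, rfl⟩ := hx
    rw [map_apply_ιMulti]
    exact ιMulti_range ℝ k ⟨_, rfl⟩
  | zero => simp
  | add x y _ _ hx hy => rw [map_add]; exact Submodule.add_mem _ hx hy
  | smul c x _ hx => rw [map_smul]; exact Submodule.smul_mem _ c hx

private lemma stmt5_contract_ιMulti (β : Module.Dual ℝ V) (n : ℕ) (w : Fin (n+1) → V) :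
    contractLeft (Q := (0 : QuadraticForm ℝ V)) β (ιMulti ℝ (n+1) w) =
      ∑ j : Fin (n+1), ((-1 : ℝ)^(j : ℕ) * β (w j)) • ιMulti ℝ n (w ∘ j.succAbove) := by
  induction n with
  | zero =>
    have key : ιMulti ℝ 1 w = ι ℝ (w 0) * ιMulti ℝ 0 (Matrix.vecTail w) := ιMulti_succ_apply w
    rw [key, contractLeft_ι_mul]
    simp
  | succ n ih =>
    have key : ιMulti ℝ (n+2) w = ι ℝ (w 0) * ιMulti ℝ (n+1) (Matrix.vecTail w) :=
      ιMulti_succ_apply w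
    have hcons : ∀ (u : Fin n → V) (a : V),
        ιMulti ℝ (n+1) (Matrix.vecCons a u) = ι ℝ a * ιMulti ℝ n u := by
      intro u a
      rw [ιMulti_succ_apply]
      simp
    have hsplit : ∑ j : Fin (n+2), ((-1:ℝ)^(j:ℕ) * β (w j)) • ιMulti ℝ (n+1) (w ∘ j.succAbove)
        = β (w 0) • ιMulti ℝ (n+1) (Matrix.vecTail w)
          + ∑ j : Fin (n+1), ((-1:ℝ)^((j:ℕ)+1) * β (Matrix.vecTail w j)) •
              ιMulti ℝ (n+1) (Matrix.vecCons (w 0) (Matrix.vecTail w ∘ j.succAbove)) := by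
      rw [Fin.sum_univ_succ]
      congr 1
      · have : w ∘ (0 : Fin (n+2)).succAbove = Matrix.vecTail w := by
          ext i; simp [Matrix.vecTail, Function.comp]
        rw [this]; simp
      · refine Finset.sum_congr rfl fun j _ => ?_
        have h2 : w ∘ (Fin.succ j).succAbove
            = Matrix.vecCons (w 0) (Matrix.vecTail w ∘ j.succAbove) := by
          ext i
          refine Fin.cases ?_ (fun i => ?_) i
          · simp [Fin.succ_succAbove_zero]
          · simp [Fin.succ_succAbove_succ, Matrix.vecTail, Function.comp]
        rw [h2, Fin.val_succ]
        rfl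
    rw [key, contractLeft_ι_mul, ih, hsplit, sub_eq_add_neg]
    congr 1
    rw [Finset.mul_sum, ← Finset.sum_neg_distrib]
    refine Finset.sum_congr rfl fun j _ => ?_
    rw [hcons, mul_smul_comm, ← neg_smul]
    congr 1
    rw [pow_succ]
    ring

private lemma stmt5_contract_pow (β : Module.Dual ℝ V) (n : ℕ) {y : ExteriorAlgebra ℝ V}
    (hy : y ∈ ⋀[ℝ]^(n+1) V) :
    contractLeft (Q := (0 : QuadraticForm ℝ V)) β y ∈ ⋀[ℝ]^n V := by
  rw [← ιMulti_span_fixedDegree] at hy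
  induction hy using Submodule.span_induction with
  | mem z hz =>
    obtain ⟨w, rfl⟩ := hz
    rw [stmt5_contract_ιMulti]
    exact Submodule.sum_mem _ fun j _ => Submodule.smul_mem _ _ (ιMulti_range ℝ n ⟨_, rfl⟩)
  | zero => simp
  | add a b _ _ ha hb => rw [map_add]; exact Submodule.add_mem _ ha hb
  | smul c a _ ha => rw [map_smul]; exact Submodule.smul_mem _ c ha

private lemma stmt5_map_proj_eq (β : Module.Dual ℝ V) (e : V) (x : ExteriorAlgebra ℝ V) :
    ExteriorAlgebra.map (LinearMap.id - β.smulRight e) x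
      = x - ι ℝ e * contractLeft (Q := (0 : QuadraticForm ℝ V)) β x := by
  have main : (ExteriorAlgebra.map (LinearMap.id - β.smulRight e)).toLinearMap
      = LinearMap.id - (LinearMap.mulLeft ℝ (ι ℝ e)) ∘ₗ contractLeft β := by
    apply LinearMap.ext_on_range (ExteriorAlgebra.ιMulti_span (R := ℝ) (M := V))
    rintro ⟨n, w⟩
    simp only [AlgHom.toLinearMap_apply, LinearMap.sub_apply, LinearMap.id_apply,
      LinearMap.comp_apply, LinearMap.mulLeft_apply]
    induction n with
    | zero =>
      have h1 : ιMulti ℝ 0 w = (1 : ExteriorAlgebra ℝ V) := ιMulti_zero_apply w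
      rw [h1, map_one, contractLeft_one, mul_zero, sub_zero]
    | succ n ih =>
      have key : ιMulti ℝ (n+1) w = ι ℝ (w 0) * ιMulti ℝ n (Matrix.vecTail w) :=
        ιMulti_succ_apply w
      rw [key, map_mul, ExteriorAlgebra.map_apply_ι, contractLeft_ι_mul, ih]
      have hP : (LinearMap.id - β.smulRight e : V →ₗ[ℝ] V) (w 0) = w 0 - β (w 0) • e := rfl
      have hanti : ∀ a b : V, ι ℝ (a : V) * ι ℝ b = -(ι ℝ b * ι ℝ a) := fun a b =>
        ι_mul_ι_comm_of_isOrtho (by simp [QuadraticMap.IsOrtho])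
      have hsq : ι ℝ e * ι ℝ e = (0 : ExteriorAlgebra ℝ V) := ι_sq_zero e
      set y := ιMulti ℝ n (Matrix.vecTail w) with hy
      set D := contractLeft (Q := (0 : QuadraticForm ℝ V)) β y with hD
      rw [hP, map_sub, map_smul, sub_mul, mul_sub, mul_sub]
      rw [smul_mul_assoc, smul_mul_assoc, ← mul_assoc (ι ℝ e) (ι ℝ e) D, hsq, zero_mul,
        smul_zero, sub_zero]
      have h3 : ι ℝ (w 0) * (ι ℝ e * D) = -(ι ℝ e * (ι ℝ (w 0) * D)) := by
        rw [← mul_assoc, hanti (w 0) e, neg_mul, mul_assoc]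
      rw [h3, mul_sub, mul_smul_comm]
      abel
  have := LinearMap.congr_fun main x
  simpa using this

private lemma stmt5_crit [FiniteDimensional ℝ V] (k : ℕ) (x : ExteriorAlgebra ℝ V) :
    ∀ (d : ℕ) (T S : Submodule ℝ V), Module.finrank ℝ T ≤ d → S ≤ T →
    x ∈ Submodule.map (ExteriorAlgebra.map T.subtype).toLinearMap (⋀[ℝ]^k T) →
    (∀ β ∈ S.dualAnnihilator, contractLeft (Q := (0:QuadraticForm ℝ V)) β x = 0) →
    x ∈ Submodule.map (ExteriorAlgebra.map S.subtype).toLinearMap (⋀[ℝ]^k S) := by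
  intro d
  induction d with
  | zero =>
    intro T S hd hST hxT _
    have hT : T = ⊥ := Submodule.finrank_eq_zero.mp (Nat.le_zero.mp hd)
    have hS : S = T := le_antisymm hST (hT ▸ bot_le)
    rwa [hS]
  | succ d ih =>
    intro T S hd hST hxT hcon
    by_cases hSTeq : S = T
    · rwa [hSTeq]
    have hlt : S < T := lt_of_le_of_ne hST hSTeq
    obtain ⟨t, htT, htS⟩ : ∃ t ∈ T, t ∉ S := SetLike.exists_of_lt hlt
    have hq : S.mkQ t ≠ 0 := by
      simpa [Submodule.Quotient.mk_eq_zero] using htS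
    obtain ⟨g, hg⟩ : ∃ g : Module.Dual ℝ (V ⧸ S), g (S.mkQ t) ≠ 0 := by
      by_contra h
      push_neg at h
      exact hq ((Module.forall_dual_apply_eq_zero_iff ℝ _).mp h)
    set β : Module.Dual ℝ V := (g (S.mkQ t))⁻¹ • (g ∘ₗ S.mkQ) with hβ
    have hβt : β t = 1 := by
      simp only [hβ, LinearMap.smul_apply, LinearMap.comp_apply, smul_eq_mul]
      exact inv_mul_cancel₀ hg
    have hβS : β ∈ S.dualAnnihilator := by
      rw [Submodule.mem_dualAnnihilator]
      intro s hs
      have : S.mkQ s = 0 := (Submodule.Quotient.mk_eq_zero S).mpr hs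
      simp [hβ, this]
    have hβ0 : ∀ s ∈ S, β s = 0 := (Submodule.mem_dualAnnihilator β).mp hβS
    have hx0 : contractLeft (Q := (0:QuadraticForm ℝ V)) β x = 0 := hcon β hβS
    set P : V →ₗ[ℝ] V := LinearMap.id - β.smulRight t with hP
    have hfix : ExteriorAlgebra.map P x = x := by
      rw [hP, stmt5_map_proj_eq, hx0, mul_zero, sub_zero]
    set T' : Submodule ℝ V := T ⊓ LinearMap.ker β with hT'
    have hST' : S ≤ T' := le_inf hST (fun s hs => LinearMap.mem_ker.mpr (hβ0 s hs))
    have htT' : t ∉ T' := by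
      intro h
      have h2 : β t = 0 := LinearMap.mem_ker.mp (Submodule.mem_inf.mp h).2
      rw [hβt] at h2
      exact one_ne_zero h2
    have hT'T : T' < T := lt_of_le_of_ne inf_le_left (fun h => htT' (h.symm ▸ htT))
    have hrank : Module.finrank ℝ T' ≤ d := by
      have := Submodule.finrank_lt_finrank_of_lt hT'T
      omega
    obtain ⟨xT, hxTmem, rfl⟩ := hxT
    have hmapsto : ∀ a : T, P a ∈ T' := by
      intro a
      have hPa : P a = (a : V) - β a • t := rfl
      refine Submodule.mem_inf.mpr ⟨?_, LinearMap.mem_ker.mpr ?_⟩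
      · rw [hPa]
        exact Submodule.sub_mem T a.2 (Submodule.smul_mem T _ htT)
      · rw [hPa, map_sub, map_smul, hβt, smul_eq_mul, mul_one, sub_self]
    set g' : T →ₗ[ℝ] T' := LinearMap.codRestrict T' (P ∘ₗ T.subtype) (fun a => hmapsto a) with hg'
    have hcomm : T'.subtype ∘ₗ g' = P ∘ₗ T.subtype :=
      LinearMap.subtype_comp_codRestrict _ _ _
    have hkey : ExteriorAlgebra.map T'.subtype (ExteriorAlgebra.map g' xT)
        = ExteriorAlgebra.map T.subtype xT := by
      rw [← AlgHom.comp_apply, ExteriorAlgebra.map_comp_map, hcomm, ← ExteriorAlgebra.map_comp_map,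
        AlgHom.comp_apply]
      exact hfix
    exact ih T' S hrank hST' ⟨ExteriorAlgebra.map g' xT, stmt5_aux_map_pow g' k hxTmem, hkey⟩ hcon

private lemma stmt5_crit_top [FiniteDimensional ℝ V] (k : ℕ) (x : ExteriorAlgebra ℝ V)
    (S : Submodule ℝ V) (hx : x ∈ ⋀[ℝ]^k V)
    (h : ∀ β ∈ S.dualAnnihilator, contractLeft (Q := (0:QuadraticForm ℝ V)) β x = 0) :
    x ∈ Submodule.map (ExteriorAlgebra.map S.subtype).toLinearMap (⋀[ℝ]^k S) := by
  refine stmt5_crit k x (Module.finrank ℝ (⊤ : Submodule ℝ V)) ⊤ S le_rfl le_top ?_ h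
  have hcomp : (⊤ : Submodule ℝ V).subtype ∘ₗ
      (Submodule.topEquiv (R := ℝ) (M := V)).symm.toLinearMap = LinearMap.id := by
    ext v; rfl
  refine ⟨ExteriorAlgebra.map (Submodule.topEquiv (R := ℝ) (M := V)).symm.toLinearMap x,
    stmt5_aux_map_pow _ k hx, ?_⟩
  rw [AlgHom.toLinearMap_apply, ← AlgHom.comp_apply, ExteriorAlgebra.map_comp_map, hcomp,
    ExteriorAlgebra.map_id]
  rfl

private lemma stmt5_pow_bot (k : ℕ) (x : ExteriorAlgebra ℝ V)
    (hx : x ∈ Submodule.map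
      (ExteriorAlgebra.map (⊥ : Submodule ℝ V).subtype).toLinearMap
        (⋀[ℝ]^(k+1) ↥(⊥ : Submodule ℝ V))) :
    x = 0 := by
  obtain ⟨y, hy, rfl⟩ := hx
  have : y = 0 := by
    rw [← ιMulti_span_fixedDegree] at hy
    induction hy using Submodule.span_induction with
    | mem z hz =>
      obtain ⟨w, rfl⟩ := hz
      have h0 : w 0 = 0 := Subtype.ext ((Submodule.mem_bot ℝ).mp (w 0).2)
      rw [ιMulti_succ_apply, h0, map_zero, zero_mul]
    | zero => rfl
    | add a b _ _ ha hb => rw [ha, hb, add_zero]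
    | smul c a _ ha => rw [ha, smul_zero]
  rw [this, map_zero]

private noncomputable def stmt5Fm (m : ℕ) (φ : Fin m → Module.Dual ℝ V) :
    ExteriorAlgebra ℝ V →ₗ[ℝ] ℝ :=
  liftAlternating (Pi.single m ((Matrix.detRowAlternating).compLinearMap (LinearMap.pi φ)))

private lemma stmt5Fm_ιMulti (m : ℕ) (φ : Fin m → Module.Dual ℝ V) (w : Fin m → V) :
    stmt5Fm m φ (ιMulti ℝ m w) = Matrix.det (Matrix.of fun i j => φ i (w j)) := by
  rw [stmt5Fm, liftAlternating_apply_ιMulti, Pi.single_eq_same,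
    AlternatingMap.compLinearMap_apply]
  rw [← Matrix.det_transpose]
  rfl

private lemma stmt5Fm_one (φ : Fin 0 → Module.Dual ℝ V) :
    stmt5Fm 0 φ (1 : ExteriorAlgebra ℝ V) = 1 := by
  have h1 : (1 : ExteriorAlgebra ℝ V) = ιMulti ℝ 0 (fun i => i.elim0) :=
    (ιMulti_zero_apply _).symm
  rw [h1, stmt5Fm_ιMulti]
  exact Matrix.det_fin_zero

private lemma stmt5_adj (m : ℕ) (β : Module.Dual ℝ V) (φ : Fin m → Module.Dual ℝ V)
    {y : ExteriorAlgebra ℝ V} (hy : y ∈ ⋀[ℝ]^(m+1) V) :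
    stmt5Fm m φ (contractLeft (Q := (0 : QuadraticForm ℝ V)) β y)
      = stmt5Fm (m+1) (Fin.cons β φ) y := by
  rw [← ιMulti_span_fixedDegree] at hy
  induction hy using Submodule.span_induction with
  | mem z hz =>
    obtain ⟨w, rfl⟩ := hz
    rw [stmt5_contract_ιMulti, map_sum]
    rw [stmt5Fm_ιMulti, Matrix.det_succ_row_zero]
    refine Finset.sum_congr rfl fun j _ => ?_
    rw [map_smul, stmt5Fm_ιMulti, smul_eq_mul]
    rw [show (Matrix.of fun i j => (Fin.cons β φ : Fin (m+1) → Module.Dual ℝ V) i (w j)) 0 j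
        = β (w j) from rfl]
    have hM : (Matrix.of fun i i' => φ i ((w ∘ j.succAbove) i'))
        = ((Matrix.of fun i j => (Fin.cons β φ : Fin (m+1) → Module.Dual ℝ V) i (w j)).submatrix
            Fin.succ j.succAbove) := by
      ext i i'
      simp [Matrix.submatrix_apply, Fin.cons_succ]
    rw [hM]
  | zero => simp
  | add a b _ _ ha hb => rw [map_add, map_add, map_add, ha, hb]
  | smul c a _ ha => rw [map_smul, map_smul, map_smul, ha]

private lemma stmt5_nondeg [FiniteDimensional ℝ V] :
    ∀ (m : ℕ) (y : ExteriorAlgebra ℝ V), y ∈ ⋀[ℝ]^m V →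
      (∀ φ : Fin m → Module.Dual ℝ V, stmt5Fm m φ y = 0) → y = 0 := by
  intro m
  induction m with
  | zero =>
    intro y hy hF
    have hy' : y ∈ (1 : Submodule ℝ (ExteriorAlgebra ℝ V)) := by
      rw [← pow_zero (LinearMap.range (ι ℝ : V →ₗ[ℝ] ExteriorAlgebra ℝ V))]
      exact hy
    obtain ⟨r, rfl⟩ := Submodule.mem_one.mp hy'
    have := hF (fun i => i.elim0)
    rw [Algebra.algebraMap_eq_smul_one, map_smul, stmt5Fm_one, smul_eq_mul, mul_one] at this
    rw [this, map_zero]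
  | succ m ih =>
    intro y hy hF
    have hc : ∀ β : Module.Dual ℝ V, contractLeft (Q := (0:QuadraticForm ℝ V)) β y = 0 := by
      intro β
      refine ih _ (stmt5_contract_pow β m hy) fun φ => ?_
      rw [stmt5_adj m β φ hy]
      exact hF _
    exact stmt5_pow_bot m y (stmt5_crit_top (m+1) y ⊥ hy fun β _ => hc β)

end StmtAux

/-- `v` belongs to the `k`-th exterior power `⋀_k(W)` of the subspace `W`, under the canonical
identification of `⋀[ℝ]^k W` with a subspace of the exterior algebra of `V`. -/
def MemExtPowOf {V : Type*} [AddCommGroup V] [Module ℝ V] (k : ℕ) (W : Submodule ℝ V)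
    (v : ExteriorAlgebra ℝ V) : Prop :=
  v ∈ Submodule.map (ExteriorAlgebra.map W.subtype).toLinearMap (⋀[ℝ]^k W)

set_option maxHeartbeats 2000000 in
/-- Let `v` be a `k`-vector (`k = m+1`) on a finite-dimensional real vector
space `V`. Let `pair` be the duality pairing between `k`-covectors and `k`-vectors (given by
determinants on simple elements), `wedge` the wedge product of an `m`-covector with a
`1`-covector, and `intProd` the interior product, characterized by
`⟨v ⌟ α, β⟩ = ⟨α ∧ β, v⟩` for every `1`-covector `β`. Then `span(v)` (the smallest subspace
`W` with `v ∈ ⋀_k(W)`) equals the set of all vectors `v ⌟ α` with `α ∈ ⋀^m(V)`. -/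
theorem stmt_5 {V : Type*} [AddCommGroup V] [Module ℝ V] [FiniteDimensional ℝ V] (m : ℕ)
    (v : ExteriorAlgebra ℝ V) (hvk : v ∈ ⋀[ℝ]^(m+1) V)
    (pair : ExteriorAlgebra ℝ (Module.Dual ℝ V) →ₗ[ℝ] ExteriorAlgebra ℝ V →ₗ[ℝ] ℝ)
    (hpair : ∀ (φ : Fin (m+1) → Module.Dual ℝ V) (w : Fin (m+1) → V),
      pair (ExteriorAlgebra.ιMulti ℝ (m+1) φ) (ExteriorAlgebra.ιMulti ℝ (m+1) w)
        = Matrix.det (Matrix.of fun i j => φ i (w j)))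
    (wedge : ExteriorAlgebra ℝ (Module.Dual ℝ V) →ₗ[ℝ] Module.Dual ℝ V →ₗ[ℝ]
      ExteriorAlgebra ℝ (Module.Dual ℝ V))
    (hwedge : ∀ (φ : Fin m → Module.Dual ℝ V) (β : Module.Dual ℝ V),
      wedge (ExteriorAlgebra.ιMulti ℝ m φ) β = ExteriorAlgebra.ιMulti ℝ (m+1) (Fin.cons β φ))
    (intProd : ExteriorAlgebra ℝ V → ExteriorAlgebra ℝ (Module.Dual ℝ V) → V)
    (hint : ∀ w α (β : Module.Dual ℝ V), β (intProd w α) = pair (wedge α β) w)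
    (W : Submodule ℝ V) (hW : MemExtPowOf (m+1) W v)
    (hmin : ∀ W' : Submodule ℝ V, MemExtPowOf (m+1) W' v → W ≤ W') :
    (W : Set V) = {u : V | ∃ α ∈ ⋀[ℝ]^m (Module.Dual ℝ V), intProd v α = u} := by
  classical
  have hsep : ∀ u₁ u₂ : V, (∀ β : Module.Dual ℝ V, β u₁ = β u₂) → u₁ = u₂ := by
    intro u₁ u₂ h
    have h0 : ∀ β : Module.Dual ℝ V, β (u₁ - u₂) = 0 := by
      intro β; rw [map_sub, h, sub_self]
    exact sub_eq_zero.mp ((Module.forall_dual_apply_eq_zero_iff ℝ _).mp h0)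
  have hi_add : ∀ α₁ α₂ : ExteriorAlgebra ℝ (Module.Dual ℝ V),
      intProd v (α₁ + α₂) = intProd v α₁ + intProd v α₂ := by
    intro α₁ α₂
    refine hsep _ _ fun β => ?_
    rw [hint, map_add, map_add, LinearMap.add_apply, map_add, LinearMap.add_apply,
      ← hint, ← hint]
  have hi_smul : ∀ (c : ℝ) (α : ExteriorAlgebra ℝ (Module.Dual ℝ V)),
      intProd v (c • α) = c • intProd v α := by
    intro c α
    refine hsep _ _ fun β => ?_
    rw [hint, map_smul, map_smul, LinearMap.smul_apply, map_smul, LinearMap.smul_apply,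
      ← hint]
  have hi_zero : intProd v 0 = 0 := by
    refine hsep _ _ fun β => ?_
    rw [hint, map_zero, map_zero, LinearMap.zero_apply, map_zero, LinearMap.zero_apply]
  obtain ⟨S, hScar⟩ : ∃ S : Submodule ℝ V,
      (S : Set V) = {u : V | ∃ α ∈ ⋀[ℝ]^m (Module.Dual ℝ V), intProd v α = u} :=
    ⟨{ carrier := {u : V | ∃ α ∈ ⋀[ℝ]^m (Module.Dual ℝ V), intProd v α = u}
       add_mem' := by
         rintro a b ⟨α₁, h₁, rfl⟩ ⟨α₂, h₂, rfl⟩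
         exact ⟨α₁ + α₂, Submodule.add_mem _ h₁ h₂, hi_add α₁ α₂⟩
       zero_mem' := ⟨0, Submodule.zero_mem _, hi_zero⟩
       smul_mem' := by
         rintro c a ⟨α, h, rfl⟩
         exact ⟨c • α, Submodule.smul_mem _ c h, hi_smul c α⟩ }, rfl⟩
  have hmem : ∀ u : V, u ∈ S ↔ ∃ α ∈ ⋀[ℝ]^m (Module.Dual ℝ V), intProd v α = u := by
    intro u
    rw [← SetLike.mem_coe, hScar]
    rfl
  -- pair agrees with the determinant functionals on `⋀^(m+1) V`
  have hpF : ∀ (ψ : Fin (m+1) → Module.Dual ℝ V) {y : ExteriorAlgebra ℝ V},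
      y ∈ ⋀[ℝ]^(m+1) V →
      pair (ExteriorAlgebra.ιMulti ℝ (m+1) ψ) y = stmt5Fm (m+1) ψ y := by
    intro ψ y hy
    rw [← ExteriorAlgebra.ιMulti_span_fixedDegree] at hy
    induction hy using Submodule.span_induction with
    | mem z hz =>
      obtain ⟨w, rfl⟩ := hz
      rw [hpair, stmt5Fm_ιMulti]
    | zero => simp
    | add a b _ _ ha hb => rw [map_add, map_add, ha, hb]
    | smul c a _ ha => rw [map_smul, map_smul, ha]
  -- all annihilators of S contract v to zero
  have hSann : ∀ β ∈ S.dualAnnihilator,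
      CliffordAlgebra.contractLeft (Q := (0:QuadraticForm ℝ V)) β v = 0 := by
    intro β hβ
    refine stmt5_nondeg m _ (stmt5_contract_pow β m hvk) fun φ => ?_
    rw [stmt5_adj m β φ hvk, ← hpF (Fin.cons β φ) hvk, ← hwedge φ β, ← hint v _ β]
    refine (Submodule.mem_dualAnnihilator β).mp hβ _ ?_
    exact (hmem _).mpr ⟨ExteriorAlgebra.ιMulti ℝ m φ,
      ExteriorAlgebra.ιMulti_range ℝ m ⟨φ, rfl⟩, rfl⟩
  have hWS : W ≤ S := hmin S (stmt5_crit_top (m+1) v S hvk hSann)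
  have hpair0 : ∀ β ∈ W.dualAnnihilator, ∀ α ∈ ⋀[ℝ]^m (Module.Dual ℝ V),
      pair (wedge α β) v = 0 := by
    intro β hβ
    obtain ⟨x', hx'mem, hvx⟩ := hW
    have hx'' : ∀ y ∈ ⋀[ℝ]^(m+1) ↥W, ∀ φ : Fin m → Module.Dual ℝ V,
        pair (wedge (ExteriorAlgebra.ιMulti ℝ m φ) β) (ExteriorAlgebra.map W.subtype y) = 0 := by
      intro y hy
      rw [← ExteriorAlgebra.ιMulti_span_fixedDegree] at hy
      induction hy using Submodule.span_induction with
      | mem z hz =>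
        obtain ⟨w, rfl⟩ := hz
        intro φ
        rw [hwedge, ExteriorAlgebra.map_apply_ιMulti, hpair]
        refine Matrix.det_eq_zero_of_row_eq_zero 0 fun j => ?_
        show β ((w j : V)) = 0
        exact (Submodule.mem_dualAnnihilator β).mp hβ _ (w j).2
      | zero => intro φ; rw [map_zero, map_zero]
      | add a b _ _ ha hb =>
        intro φ
        rw [map_add, map_add, ha φ, hb φ, add_zero]
      | smul c a _ ha =>
        intro φ
        rw [map_smul, map_smul, ha φ, smul_zero]
    intro α hα
    rw [← ExteriorAlgebra.ιMulti_span_fixedDegree] at hα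
    induction hα using Submodule.span_induction with
    | mem z hz =>
      obtain ⟨φ, rfl⟩ := hz
      rw [← hvx]
      exact hx'' x' hx'mem φ
    | zero => rw [map_zero, LinearMap.zero_apply, map_zero, LinearMap.zero_apply]
    | add a b _ _ ha hb =>
      rw [map_add, LinearMap.add_apply, map_add, LinearMap.add_apply, ha, hb, add_zero]
    | smul c a _ ha =>
      rw [map_smul, LinearMap.smul_apply, map_smul, LinearMap.smul_apply, ha, smul_zero]
  have hSW : S ≤ W := by
    intro u hu
    obtain ⟨α, hα, rfl⟩ := (hmem u).mp hu
    rw [← Subspace.forall_mem_dualAnnihilator_apply_eq_zero_iff]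
    intro β hβ
    rw [hint]
    exact hpair0 β hβ α hα
  rw [← hScar]
  exact congrArg _ (le_antisymm hWS hSW)
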